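/- Let N points be chosen independently and uniformly at random in [0,1)^d, and partition [0,1)^d into b^{md} equal sub-cubes. For a fixed set of k distinct sub-cubes, let p_N(k) be the probability that every one of the k sub-cubes contains at least one of the N points. Then p_N is non-increasing in k, and p_N(2k) ≤ (p_N(k))^2. -/

import Mathlib

open MeasureTheory Finset
open scoped ENNReal

/-- The uniform distribution on `[0,1)^d`. -/
noncomputable def unif (d : ℕ) : Measure (Fin d → ℝ) :=
  Measure.pi fun _ => volume.restrict (Set.Ico (0 : ℝ) 1)

/-- `N` points chosen independently and uniformly in `[0,1)^d`. -/
noncomputable def sampleMeasure (N d : ℕ) : Measure (Fin N → Fin d → ℝ) :=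
  Measure.pi fun _ => unif d

/-- The sub-cube of side `b^{-m}` indexed by `a`. -/
def cube (b m d : ℕ) (a : Fin d → ℕ) : Set (Fin d → ℝ) :=
  {x | ∀ j, (a j : ℝ) / (b : ℝ) ^ m ≤ x j ∧ x j < ((a j : ℝ) + 1) / (b : ℝ) ^ m}

/-- The event that every sub-cube indexed by `C` contains at least one of the `N` points. -/
def occEvent (b m d N : ℕ) (C : Finset (Fin d → ℕ)) : Set (Fin N → Fin d → ℝ) :=
  {ω | ∀ a ∈ C, ∃ i, ω i ∈ cube b m d a}

section Counting
variable {α : Type*} [Fintype α] [DecidableEq α]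

/-- Number of functions `Fin N → α` whose range contains `A`. -/
def covCount (α : Type*) [Fintype α] [DecidableEq α] (N : ℕ) (A : Finset α) : ℕ :=
  Fintype.card {f : Fin N → α // ∀ a ∈ A, ∃ i, f i = a}

lemma covCount_eq_card_filter (N : ℕ) (A : Finset α) :
    covCount α N A = (Finset.univ.filter (fun f : Fin N → α => ∀ a ∈ A, ∃ i, f i = a)).card :=
  Fintype.card_subtype _

lemma covCount_anti (N : ℕ) {A B : Finset α} (h : A ⊆ B) : covCount α N B ≤ covCount α N A := by
  rw [covCount_eq_card_filter, covCount_eq_card_filter]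
  exact Finset.card_le_card (Finset.monotone_filter_right _
    (fun f _ hf a ha => hf a (h ha)))

lemma covCount_zero_empty : covCount α 0 (∅ : Finset α) = 1 := by
  rw [covCount_eq_card_filter]
  simp

lemma covCount_zero_of_nonempty {A : Finset α} (h : A.Nonempty) : covCount α 0 A = 0 := by
  rw [covCount_eq_card_filter]
  obtain ⟨a, ha⟩ := h
  rw [Finset.card_eq_zero, Finset.filter_eq_empty_iff]
  intro f _ hf
  obtain ⟨i, _⟩ := hf a ha
  exact i.elim0

lemma covCount_succ (N : ℕ) (A : Finset α) :
    covCount α (N + 1) A = ∑ x : α, covCount α N (A.erase x) := by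
  have e : {f : Fin (N + 1) → α // ∀ a ∈ A, ∃ i, f i = a} ≃
      Σ x : α, {g : Fin N → α // ∀ a ∈ A.erase x, ∃ i, g i = a} :=
    { toFun := fun f => ⟨f.1 0, Fin.tail f.1, by
        intro a ha
        obtain ⟨hne, haA⟩ := Finset.mem_erase.1 ha
        obtain ⟨i, hi⟩ := f.2 a haA
        rcases Fin.eq_zero_or_eq_succ i with h0 | ⟨j, rfl⟩
        · subst h0; exact absurd hi.symm hne
        · exact ⟨j, hi⟩⟩
      invFun := fun p => ⟨Fin.cons p.1 p.2.1, by
        intro a ha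
        by_cases hax : a = p.1
        · exact ⟨0, by simp [hax]⟩
        · obtain ⟨i, hi⟩ := p.2.2 a (Finset.mem_erase.2 ⟨hax, ha⟩)
          exact ⟨i.succ, by simp [hi]⟩⟩
      left_inv := fun f => Subtype.ext (Fin.cons_self_tail f.1)
      right_inv := fun p => by
        obtain ⟨x, g, hg⟩ := p
        simp [Fin.tail_cons]
        exact HEq.rfl }
  rw [covCount, Fintype.card_congr e, Fintype.card_sigma]
  rfl

/-- Chebyshev-type estimate for "anti-correlated" functions. -/
lemma card_mul_sum_le (u v : α → ℕ) (a c : ℕ) (hu : ∀ x, a ≤ u x) (hv : ∀ x, c ≤ v x)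
    (h : ∀ x, u x = a ∨ v x = c) :
    Fintype.card α * ∑ x : α, u x * v x ≤ (∑ x : α, u x) * (∑ x : α, v x) := by
  set M := Fintype.card α with hM
  set U := ∑ x : α, (u x - a) with hU
  set V := ∑ x : α, (v x - c) with hV
  have h1 : ∑ x : α, u x = M * a + U := by
    calc ∑ x : α, u x = ∑ x : α, (a + (u x - a)) :=
          Finset.sum_congr rfl (fun x _ => (Nat.add_sub_cancel' (hu x)).symm)
      _ = M * a + U := by
          rw [Finset.sum_add_distrib, Finset.sum_const, Finset.card_univ, smul_eq_mul]
  have h2 : ∑ x : α, v x = M * c + V := by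
    calc ∑ x : α, v x = ∑ x : α, (c + (v x - c)) :=
          Finset.sum_congr rfl (fun x _ => (Nat.add_sub_cancel' (hv x)).symm)
      _ = M * c + V := by
          rw [Finset.sum_add_distrib, Finset.sum_const, Finset.card_univ, smul_eq_mul]
  have h3 : ∑ x : α, u x * v x = M * (a * c) + a * V + c * U := by
    have key : ∀ x : α, u x * v x = a * c + a * (v x - c) + c * (u x - a) := by
      intro x
      rcases h x with h' | h'
      · have hvx : v x = c + (v x - c) := (Nat.add_sub_cancel' (hv x)).symm
        rw [h']
        rw [Nat.sub_self, Nat.mul_zero, Nat.add_zero]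
        calc a * v x = a * (c + (v x - c)) := by rw [← hvx]
          _ = a * c + a * (v x - c) := by ring
      · have hux : u x = a + (u x - a) := (Nat.add_sub_cancel' (hu x)).symm
        rw [h']
        rw [Nat.sub_self, Nat.mul_zero, Nat.add_zero]
        calc u x * c = (a + (u x - a)) * c := by rw [← hux]
          _ = a * c + c * (u x - a) := by ring
    calc ∑ x : α, u x * v x = ∑ x : α, (a * c + a * (v x - c) + c * (u x - a)) :=
          Finset.sum_congr rfl (fun x _ => key x)
      _ = M * (a * c) + a * V + c * U := by
          rw [Finset.sum_add_distrib, Finset.sum_add_distrib, Finset.sum_const,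
            Finset.card_univ, smul_eq_mul, ← Finset.mul_sum, ← Finset.mul_sum]
  rw [h1, h2, h3]
  nlinarith [Nat.zero_le (U * V)]

lemma covCount_union_le (N : ℕ) (A B : Finset α) (hAB : Disjoint A B) :
    Fintype.card α ^ N * covCount α N (A ∪ B) ≤ covCount α N A * covCount α N B := by
  induction N generalizing A B with
  | zero =>
    by_cases hA : A = ∅
    · by_cases hB : B = ∅
      · subst hA; subst hB; simp [covCount_zero_empty]
      · have : (A ∪ B).Nonempty := by
          rw [Finset.nonempty_iff_ne_empty]; simp [hA, hB]
        simp [covCount_zero_of_nonempty this]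
    · have : (A ∪ B).Nonempty := by
        rw [Finset.nonempty_iff_ne_empty]
        intro hcon
        exact hA (Finset.union_eq_empty.1 hcon).1
      simp [covCount_zero_of_nonempty this]
  | succ N ih =>
    set M := Fintype.card α with hM
    set u : α → ℕ := fun x => covCount α N (A.erase x) with hu
    set v : α → ℕ := fun x => covCount α N (B.erase x) with hv
    have hstep : ∀ x : α, M ^ N * covCount α N ((A ∪ B).erase x) ≤ u x * v x := by
      intro x
      rw [Finset.erase_union_distrib]
      exact ih _ _ (hAB.mono (Finset.erase_subset _ _) (Finset.erase_subset _ _))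
    calc M ^ (N + 1) * covCount α (N + 1) (A ∪ B)
        = M * ∑ x : α, M ^ N * covCount α N ((A ∪ B).erase x) := by
          rw [covCount_succ, Finset.mul_sum]
          rw [pow_succ, Finset.mul_sum]
          refine Finset.sum_congr rfl (fun x _ => by ring)
      _ ≤ M * ∑ x : α, u x * v x := by
          exact Nat.mul_le_mul_left _ (Finset.sum_le_sum (fun x _ => hstep x))
      _ ≤ (∑ x : α, u x) * (∑ x : α, v x) := by
          refine card_mul_sum_le u v (covCount α N A) (covCount α N B)
            (fun x => covCount_anti _ (Finset.erase_subset _ _))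
            (fun x => covCount_anti _ (Finset.erase_subset _ _)) (fun x => ?_)
          by_cases hx : x ∈ A
          · right
            show covCount α N (B.erase x) = covCount α N B
            rw [Finset.erase_eq_of_notMem (Finset.disjoint_left.1 hAB hx)]
          · left
            show covCount α N (A.erase x) = covCount α N A
            rw [Finset.erase_eq_of_notMem hx]
      _ = covCount α (N + 1) A * covCount α (N + 1) B := by
          rw [covCount_succ, covCount_succ]

lemma covCount_card_congr (N : ℕ) {A B : Finset α} (h : A.card = B.card) :
    covCount α N A = covCount α N B := by
  have e1 : {x // x ∈ A} ≃ {x // x ∈ B} := by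
    apply Fintype.equivOfCardEq
    rw [Fintype.card_coe, Fintype.card_coe, h]
  set σ : Equiv.Perm α := e1.extendSubtype with hσdef
  have hmem : ∀ x, x ∈ A ↔ σ x ∈ B := by
    intro x
    constructor
    · intro hx; exact e1.extendSubtype_mem x hx
    · intro hx
      by_contra hxa
      exact e1.extendSubtype_not_mem x hxa hx
  apply Fintype.card_congr
  exact {
    toFun := fun f => ⟨σ ∘ f.1, by
      intro bb hbb
      obtain ⟨i, hi⟩ := f.2 (σ.symm bb) ((hmem _).2 (by simpa using hbb))
      exact ⟨i, by simp [hi]⟩⟩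
    invFun := fun g => ⟨σ.symm ∘ g.1, by
      intro aa haa
      obtain ⟨i, hi⟩ := g.2 (σ aa) ((hmem _).1 haa)
      exact ⟨i, by simp [hi]⟩⟩
    left_inv := fun f => Subtype.ext (by funext i; simp)
    right_inv := fun g => Subtype.ext (by funext i; simp) }
end Counting






section Meas
variable {b m d N : ℕ}

lemma cube_eq_pi (b m d : ℕ) (a : Fin d → ℕ) :
    cube b m d a =
      Set.univ.pi (fun j => Set.Ico ((a j : ℝ) / (b : ℝ) ^ m) (((a j : ℝ) + 1) / (b : ℝ) ^ m)) := by
  ext x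
  simp [cube, Set.mem_pi]

lemma measurableSet_cube (b m d : ℕ) (a : Fin d → ℕ) : MeasurableSet (cube b m d a) := by
  rw [cube_eq_pi]
  exact MeasurableSet.univ_pi fun j => measurableSet_Ico

lemma Ico_subset_unit (hb : 1 ≤ b) {t : ℕ} (ht : t < b ^ m) :
    Set.Ico ((t : ℝ) / (b : ℝ) ^ m) (((t : ℝ) + 1) / (b : ℝ) ^ m) ⊆ Set.Ico (0 : ℝ) 1 := by
  have hB : (0 : ℝ) < (b : ℝ) ^ m := by positivity
  apply Set.Ico_subset_Ico
  · positivity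
  · rw [div_le_one hB]
    have : (t : ℝ) + 1 ≤ ((b : ℝ) ^ m) := by
      have : (t + 1 : ℕ) ≤ b ^ m := ht
      calc (t : ℝ) + 1 = ((t + 1 : ℕ) : ℝ) := by push_cast; ring
        _ ≤ ((b ^ m : ℕ) : ℝ) := by exact_mod_cast this
        _ = (b : ℝ) ^ m := by push_cast; ring
    linarith

lemma unif_cube (hb : 1 ≤ b) {a : Fin d → ℕ} (ha : ∀ j, a j < b ^ m) :
    unif d (cube b m d a) = (ENNReal.ofReal (((b : ℝ) ^ m)⁻¹)) ^ d := by
  have hB : (0 : ℝ) < (b : ℝ) ^ m := by positivity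
  rw [cube_eq_pi, unif, Measure.pi_pi]
  have key : ∀ j : Fin d,
      (volume.restrict (Set.Ico (0 : ℝ) 1))
        (Set.Ico ((a j : ℝ) / (b : ℝ) ^ m) (((a j : ℝ) + 1) / (b : ℝ) ^ m)) =
      ENNReal.ofReal (((b : ℝ) ^ m)⁻¹) := by
    intro j
    rw [Measure.restrict_apply measurableSet_Ico,
      Set.inter_eq_left.2 (Ico_subset_unit hb (ha j)), Real.volume_Ico]
    congr 1
    field_simp
    ring
  simp_rw [key]
  rw [Finset.prod_const, Finset.card_univ, Fintype.card_fin]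

lemma mem_cube_iff_floor (hb : 1 ≤ b) {a : Fin d → ℕ} {x : Fin d → ℝ} :
    x ∈ cube b m d a ↔ ∀ j, (a j : ℝ) ≤ x j * (b : ℝ) ^ m ∧ x j * (b : ℝ) ^ m < (a j : ℝ) + 1 := by
  have hB : (0 : ℝ) < (b : ℝ) ^ m := by positivity
  constructor
  · intro h j
    obtain ⟨h1, h2⟩ := h j
    exact ⟨(div_le_iff₀ hB).1 h1, (lt_div_iff₀ hB).1 h2⟩
  · intro h j
    obtain ⟨h1, h2⟩ := h j
    exact ⟨(div_le_iff₀ hB).2 (by linarith), (lt_div_iff₀ hB).2 (by linarith)⟩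

lemma cube_unique (hb : 1 ≤ b) {a a' : Fin d → ℕ} {x : Fin d → ℝ}
    (h : x ∈ cube b m d a) (h' : x ∈ cube b m d a') : a = a' := by
  funext j
  obtain ⟨h1, h2⟩ := (mem_cube_iff_floor hb).1 h j
  obtain ⟨h1', h2'⟩ := (mem_cube_iff_floor hb).1 h' j
  have hx0 : (0 : ℝ) ≤ x j * (b : ℝ) ^ m := le_trans (Nat.cast_nonneg _) h1
  have e1 : ⌊x j * (b : ℝ) ^ m⌋₊ = a j := (Nat.floor_eq_iff hx0).2 ⟨h1, by push_cast; linarith⟩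
  have e2 : ⌊x j * (b : ℝ) ^ m⌋₊ = a' j := (Nat.floor_eq_iff hx0).2 ⟨h1', by push_cast; linarith⟩
  rw [← e1, e2]

lemma mem_cube_floor (hb : 1 ≤ b) {x : Fin d → ℝ} (hx : ∀ j, x j ∈ Set.Ico (0 : ℝ) 1) :
    (∀ j, ⌊x j * (b : ℝ) ^ m⌋₊ < b ^ m) ∧
      x ∈ cube b m d (fun j => ⌊x j * (b : ℝ) ^ m⌋₊) := by
  have hB : (0 : ℝ) < (b : ℝ) ^ m := by positivity
  have hx0 : ∀ j, (0 : ℝ) ≤ x j * (b : ℝ) ^ m := by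
    intro j; exact mul_nonneg (hx j).1 (le_of_lt hB)
  constructor
  · intro j
    rw [Nat.floor_lt (hx0 j)]
    calc x j * (b : ℝ) ^ m < 1 * (b : ℝ) ^ m := by
          exact mul_lt_mul_of_pos_right (hx j).2 hB
      _ = (b : ℝ) ^ m := one_mul _
      _ = ((b ^ m : ℕ) : ℝ) := by push_cast; ring
  · rw [mem_cube_iff_floor hb]
    intro j
    exact ⟨Nat.floor_le (hx0 j), Nat.lt_floor_add_one _⟩


/-- index type for good sub-cubes -/
abbrev Idx (b m d : ℕ) := Fin d → Fin (b ^ m)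

def ιc (b m d : ℕ) : Idx b m d → (Fin d → ℕ) := fun g j => (g j : ℕ)

lemma ιc_injective (b m d : ℕ) : Function.Injective (ιc b m d) := by
  intro g g' h
  funext j
  exact Fin.val_injective (congrFun h j)

def cell (b m d N : ℕ) (f : Fin N → Idx b m d) : Set (Fin N → Fin d → ℝ) :=
  Set.univ.pi (fun i => cube b m d (ιc b m d (f i)))

instance unif_prob (d : ℕ) : IsProbabilityMeasure (unif d) := by
  constructor
  rw [unif, Measure.pi_univ]
  simp [Real.volume_Ico]

lemma measurableSet_cell (f : Fin N → Idx b m d) : MeasurableSet (cell b m d N f) :=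
  MeasurableSet.univ_pi fun i => measurableSet_cube b m d _

lemma cell_measure (hb : 1 ≤ b) (f : Fin N → Idx b m d) :
    sampleMeasure N d (cell b m d N f) = ((ENNReal.ofReal (((b : ℝ) ^ m)⁻¹)) ^ d) ^ N := by
  rw [cell, sampleMeasure, Measure.pi_pi]
  have : ∀ i, unif d (cube b m d (ιc b m d (f i))) = (ENNReal.ofReal (((b : ℝ) ^ m)⁻¹)) ^ d := by
    intro i
    exact unif_cube hb (fun j => (f i j).isLt)
  simp_rw [this]
  rw [Finset.prod_const, Finset.card_univ, Fintype.card_fin]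

lemma cell_disjoint (hb : 1 ≤ b) {f f' : Fin N → Idx b m d} (h : f ≠ f') :
    Disjoint (cell b m d N f) (cell b m d N f') := by
  rw [Set.disjoint_left]
  intro ω hω hω'
  apply h
  funext i
  apply ιc_injective b m d
  exact cube_unique hb (hω i (Set.mem_univ i)) (hω' i (Set.mem_univ i))

/-- the full-measure box -/
def ubox (d N : ℕ) : Set (Fin N → Fin d → ℝ) :=
  Set.univ.pi (fun _ : Fin N => Set.univ.pi (fun _ : Fin d => Set.Ico (0 : ℝ) 1))

lemma sample_univ : sampleMeasure N d Set.univ = 1 := by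
  rw [sampleMeasure, Measure.pi_univ]
  have : unif d Set.univ = 1 := by
    rw [unif, Measure.pi_univ]
    simp [Real.volume_Ico]
  simp [this]

lemma sample_ubox : sampleMeasure N d (ubox d N) = 1 := by
  rw [ubox, sampleMeasure, Measure.pi_pi]
  have : unif d (Set.univ.pi (fun _ : Fin d => Set.Ico (0 : ℝ) 1)) = 1 := by
    rw [unif, Measure.pi_pi]
    simp [Measure.restrict_apply measurableSet_Ico, Real.volume_Ico]
  simp [this]

lemma measurableSet_ubox : MeasurableSet (ubox d N) :=
  MeasurableSet.univ_pi fun _ => MeasurableSet.univ_pi fun _ => measurableSet_Ico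

lemma sample_ubox_compl : sampleMeasure N d (ubox d N)ᶜ = 0 := by
  have h1 := sample_ubox (N := N) (d := d)
  have h2 := sample_univ (N := N) (d := d)
  have := measure_compl (μ := sampleMeasure N d) measurableSet_ubox (by rw [h1]; exact ENNReal.one_ne_top)
  rw [h1, h2] at this
  simpa using this

lemma measure_inter_ubox (s : Set (Fin N → Fin d → ℝ)) :
    sampleMeasure N d (s ∩ ubox d N) = sampleMeasure N d s := by
  apply le_antisymm (measure_mono Set.inter_subset_left)
  calc sampleMeasure N d s ≤ sampleMeasure N d ((s ∩ ubox d N) ∪ (ubox d N)ᶜ) := by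
        apply measure_mono
        intro x hx
        by_cases hb : x ∈ ubox d N
        · exact Or.inl ⟨hx, hb⟩
        · exact Or.inr hb
    _ ≤ sampleMeasure N d (s ∩ ubox d N) + sampleMeasure N d (ubox d N)ᶜ := measure_union_le _ _
    _ = sampleMeasure N d (s ∩ ubox d N) := by rw [sample_ubox_compl, add_zero]

lemma cell_subset_ubox (hb : 1 ≤ b) (f : Fin N → Idx b m d) : cell b m d N f ⊆ ubox d N := by
  intro ω hω
  rw [ubox, Set.mem_pi]
  intro i _
  rw [Set.mem_pi]
  intro j _
  have hc := hω i (Set.mem_univ i)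
  obtain ⟨h1, h2⟩ := hc j
  exact Ico_subset_unit hb ((f i j).isLt) ⟨h1, h2⟩

lemma occ_inter_ubox (hb : 1 ≤ b) (C : Finset (Fin d → ℕ)) (hC : ∀ a ∈ C, ∀ j, a j < b ^ m) :
    occEvent b m d N C ∩ ubox d N =
      ⋃ f ∈ Finset.univ.filter
        (fun f : Fin N → Idx b m d => ∀ a ∈ C, ∃ i, ιc b m d (f i) = a), cell b m d N f := by
  ext ω
  constructor
  · rintro ⟨hocc, hbox⟩
    have hωij : ∀ i, ∀ j, ω i j ∈ Set.Ico (0 : ℝ) 1 := by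
      intro i j
      have := (Set.mem_pi.1 hbox) i (Set.mem_univ i)
      exact (Set.mem_pi.1 this) j (Set.mem_univ j)
    have hfl : ∀ i, (∀ j, ⌊ω i j * (b : ℝ) ^ m⌋₊ < b ^ m) ∧
        ω i ∈ cube b m d (fun j => ⌊ω i j * (b : ℝ) ^ m⌋₊) :=
      fun i => mem_cube_floor hb (hωij i)
    set f : Fin N → Idx b m d := fun i j => ⟨⌊ω i j * (b : ℝ) ^ m⌋₊, (hfl i).1 j⟩ with hf
    have hcell : ω ∈ cell b m d N f := by
      rw [cell, Set.mem_pi]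
      intro i _
      exact (hfl i).2
    refine Set.mem_iUnion₂.2 ⟨f, ?_, hcell⟩
    rw [Finset.mem_filter]
    refine ⟨Finset.mem_univ _, ?_⟩
    intro a ha
    obtain ⟨i, hi⟩ := hocc a ha
    exact ⟨i, cube_unique hb (hfl i).2 hi⟩
  · intro h
    obtain ⟨f, hfmem, hcell⟩ := Set.mem_iUnion₂.1 h
    rw [Finset.mem_filter] at hfmem
    constructor
    · intro a ha
      obtain ⟨i, hi⟩ := hfmem.2 a ha
      exact ⟨i, hi ▸ (Set.mem_pi.1 hcell) i (Set.mem_univ i)⟩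
    · exact cell_subset_ubox hb f hcell

end Meas

section Key
variable {b m d N : ℕ}

def toIdx (b m d : ℕ) (C : Finset (Fin d → ℕ)) : Finset (Idx b m d) :=
  Finset.univ.filter (fun g => ιc b m d g ∈ C)

lemma covers_iff {C : Finset (Fin d → ℕ)} (hC : ∀ a ∈ C, ∀ j, a j < b ^ m)
    (f : Fin N → Idx b m d) :
    (∀ a ∈ C, ∃ i, ιc b m d (f i) = a) ↔ (∀ g ∈ toIdx b m d C, ∃ i, f i = g) := by
  constructor
  · intro h g hg
    rw [toIdx, Finset.mem_filter] at hg
    obtain ⟨i, hi⟩ := h (ιc b m d g) hg.2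
    exact ⟨i, ιc_injective b m d hi⟩
  · intro h a ha
    set g : Idx b m d := fun j => ⟨a j, hC a ha j⟩ with hgdef
    have hg1 : ιc b m d g = a := rfl
    have hg2 : g ∈ toIdx b m d C := by
      rw [toIdx, Finset.mem_filter]
      exact ⟨Finset.mem_univ _, by rw [hg1]; exact ha⟩
    obtain ⟨i, hi⟩ := h g hg2
    exact ⟨i, by rw [hi, hg1]⟩

lemma toIdx_card {C : Finset (Fin d → ℕ)} (hC : ∀ a ∈ C, ∀ j, a j < b ^ m) :
    (toIdx b m d C).card = C.card := by
  have himg : (toIdx b m d C).image (ιc b m d) = C := by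
    ext a
    constructor
    · intro ha
      obtain ⟨g, hg, rfl⟩ := Finset.mem_image.1 ha
      exact (Finset.mem_filter.1 hg).2
    · intro ha
      refine Finset.mem_image.2 ⟨fun j => ⟨a j, hC a ha j⟩, ?_, rfl⟩
      rw [toIdx, Finset.mem_filter]
      exact ⟨Finset.mem_univ _, ha⟩
  calc (toIdx b m d C).card = ((toIdx b m d C).image (ιc b m d)).card :=
        (Finset.card_image_of_injective _ (ιc_injective b m d)).symm
    _ = C.card := by rw [himg]

lemma toIdx_union (C D : Finset (Fin d → ℕ)) :
    toIdx b m d (C ∪ D) = toIdx b m d C ∪ toIdx b m d D := by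
  ext g
  simp [toIdx, Finset.mem_union]

lemma toIdx_disjoint {C D : Finset (Fin d → ℕ)} (h : Disjoint C D) :
    Disjoint (toIdx b m d C) (toIdx b m d D) := by
  rw [Finset.disjoint_left]
  intro g hg hg'
  exact Finset.disjoint_left.1 h (Finset.mem_filter.1 hg).2 (Finset.mem_filter.1 hg').2

lemma measure_occ (hb : 1 ≤ b) (C : Finset (Fin d → ℕ)) (hC : ∀ a ∈ C, ∀ j, a j < b ^ m) :
    sampleMeasure N d (occEvent b m d N C) =
      (covCount (Idx b m d) N (toIdx b m d C) : ℝ≥0∞) *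
        ((ENNReal.ofReal (((b : ℝ) ^ m)⁻¹)) ^ d) ^ N := by
  rw [← measure_inter_ubox, occ_inter_ubox hb C hC,
    measure_biUnion_finset (fun f _ f' _ hne => cell_disjoint hb hne)
      (fun f _ => measurableSet_cell f)]
  rw [Finset.sum_congr rfl (fun f _ => cell_measure hb f), Finset.sum_const, nsmul_eq_mul]
  congr 2
  rw [covCount_eq_card_filter]
  congr 1
  apply Finset.filter_congr
  intro f _
  exact covers_iff hC f

lemma card_mul_kappa (hb : 1 ≤ b) :
    (Fintype.card (Idx b m d) : ℝ≥0∞) * (ENNReal.ofReal (((b : ℝ) ^ m)⁻¹)) ^ d = 1 := by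
  have hbpos : (0 : ℝ) < (b : ℝ) ^ m := by positivity
  have h1 : ENNReal.ofReal (((b : ℝ) ^ m)⁻¹) = (((b ^ m : ℕ) : ℝ≥0∞))⁻¹ := by
    rw [ENNReal.ofReal_inv_of_pos hbpos]
    congr 1
    have : ((b : ℝ) ^ m) = ((b ^ m : ℕ) : ℝ) := by push_cast; ring
    rw [this, ENNReal.ofReal_natCast]
  rw [h1, Fintype.card_fun, Fintype.card_fin, Fintype.card_fin]
  rw [← ENNReal.inv_pow]
  have hcast : ((((b ^ m) ^ d : ℕ)) : ℝ≥0∞) = (((b ^ m : ℕ) : ℝ≥0∞)) ^ d := by push_cast; ring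
  rw [hcast]
  apply ENNReal.mul_inv_cancel
  · apply pow_ne_zero
    simp only [ne_eq, Nat.cast_eq_zero]
    positivity
  · exact ENNReal.pow_ne_top (ENNReal.natCast_ne_top _)

end Key

theorem stmt6 (b m d N k : ℕ) (hb : 2 ≤ b) (hd : 1 ≤ d) (hm : 1 ≤ m) (hN : 1 ≤ N)
    (hk : 2 * k ≤ b ^ (m * d)) :
    -- `p_N` does not depend on which `k` distinct sub-cubes are chosen
    (∀ C D : Finset (Fin d → ℕ),
      (∀ a ∈ C, ∀ j, a j < b ^ m) → (∀ a ∈ D, ∀ j, a j < b ^ m) →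
      C.card = D.card →
      sampleMeasure N d (occEvent b m d N C) = sampleMeasure N d (occEvent b m d N D)) ∧
    -- `p_N(k)` is non-increasing in `k`
    (∀ C D : Finset (Fin d → ℕ),
      (∀ a ∈ D, ∀ j, a j < b ^ m) → C ⊆ D →
      sampleMeasure N d (occEvent b m d N D) ≤ sampleMeasure N d (occEvent b m d N C)) ∧
    -- `p_N(2k) ≤ (p_N(k))^2`
    (∀ C D : Finset (Fin d → ℕ),
      (∀ a ∈ C, ∀ j, a j < b ^ m) → (∀ a ∈ D, ∀ j, a j < b ^ m) →
      C.card = k → D.card = k → Disjoint C D →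
      sampleMeasure N d (occEvent b m d N (C ∪ D)) ≤
        sampleMeasure N d (occEvent b m d N C) ^ 2) := by

  have hb1 : 1 ≤ b := le_trans (by norm_num) hb
  set κ : ℝ≥0∞ := (ENNReal.ofReal (((b : ℝ) ^ m)⁻¹)) ^ d with hκ
  refine ⟨?_, ?_, ?_⟩
  · intro C D hC hD hcard
    have hcc : covCount (Idx b m d) N (toIdx b m d C) = covCount (Idx b m d) N (toIdx b m d D) :=
      covCount_card_congr N
        (show (toIdx b m d C).card = (toIdx b m d D).card by
          rw [toIdx_card hC, toIdx_card hD, hcard])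
    rw [measure_occ hb1 C hC, measure_occ hb1 D hD, hcc]
  · intro C D hD hsub
    apply measure_mono
    intro ω hω a ha
    exact hω a (hsub ha)
  · intro C D hC hD hCk hDk hdisj
    have hCD : ∀ a ∈ C ∪ D, ∀ j, a j < b ^ m := by
      intro a ha
      rcases Finset.mem_union.1 ha with h | h
      · exact hC a h
      · exact hD a h
    rw [measure_occ hb1 _ hCD, measure_occ hb1 C hC]
    set M : ℕ := Fintype.card (Idx b m d) with hM
    set cU : ℕ := covCount (Idx b m d) N (toIdx b m d (C ∪ D)) with hcU
    set cC : ℕ := covCount (Idx b m d) N (toIdx b m d C) with hcC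
    set cD : ℕ := covCount (Idx b m d) N (toIdx b m d D) with hcD
    have hnat : M ^ N * cU ≤ cC * cD := by
      rw [hcU, toIdx_union]
      exact covCount_union_le N _ _ (toIdx_disjoint hdisj)
    have hDCeq : cD = cC :=
      covCount_card_congr N (by rw [toIdx_card hD, toIdx_card hC, hCk, hDk])
    have hMκ : (M : ℝ≥0∞) * κ = 1 := card_mul_kappa hb1
    have hcast : ((M : ℝ≥0∞)) ^ N * (cU : ℝ≥0∞) ≤ (cC : ℝ≥0∞) * (cD : ℝ≥0∞) := by
      exact_mod_cast hnat
    have habsorb : (M : ℝ≥0∞) ^ N * (κ ^ N * κ ^ N) = κ ^ N := by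
      rw [← mul_assoc, ← mul_pow, hMκ, one_pow, one_mul]
    calc (cU : ℝ≥0∞) * κ ^ N
        = ((M : ℝ≥0∞) ^ N * (cU : ℝ≥0∞)) * (κ ^ N * κ ^ N) := by
          rw [show ((M : ℝ≥0∞) ^ N * (cU : ℝ≥0∞)) * (κ ^ N * κ ^ N) =
            (cU : ℝ≥0∞) * ((M : ℝ≥0∞) ^ N * (κ ^ N * κ ^ N)) from by ring, habsorb]
      _ ≤ ((cC : ℝ≥0∞) * (cD : ℝ≥0∞)) * (κ ^ N * κ ^ N) := mul_le_mul_left hcast _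
      _ = ((cC : ℝ≥0∞) * κ ^ N) ^ 2 := by rw [hDCeq]; ring
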